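/- Let R be an integral domain, let ζ ∈ R, and let f, g ∈ R[x] be polynomials with nonzero leading coefficients, where m denotes the degree of f. If for every integer k with 0 ≤ k < m the element g(ζ)^{m−k} divides the value at ζ of the k-th Hasse derivative of f (i.e., the divided derivative (1/k!)·f^{(k)}(ζ)), then g(ζ)^m divides the resultant res_x(f, g) in R. -/

import Mathlib

open Polynomial

/-- The Sylvester matrix of two polynomials `f` and `g`, of size
`(g.natDegree + f.natDegree) × (g.natDegree + f.natDegree)`: the first `g.natDegree` rows
carry the coefficients of `f` (from the leading coefficient down), shifted, and the remaining
`f.natDegree` rows carry the coefficients of `g`. -/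
noncomputable def sylvesterMatrix {R : Type*} [CommRing R] (f g : R[X]) :
    Matrix (Fin (g.natDegree + f.natDegree)) (Fin (g.natDegree + f.natDegree)) R :=
  fun i j =>
    if (i : ℕ) < g.natDegree then
      (if (i : ℕ) ≤ (j : ℕ) ∧ (j : ℕ) ≤ (i : ℕ) + f.natDegree then
        f.coeff (f.natDegree + (i : ℕ) - (j : ℕ))
      else 0)
    else
      (if (i : ℕ) - g.natDegree ≤ (j : ℕ) ∧ (j : ℕ) ≤ (i : ℕ) - g.natDegree + g.natDegree then
        g.coeff (g.natDegree + ((i : ℕ) - g.natDegree) - (j : ℕ))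
      else 0)

/-- The resultant `res_x(f, g)` of two polynomials, i.e. the determinant of their
Sylvester matrix. -/
noncomputable def resultant {R : Type*} [CommRing R] (f g : R[X]) : R :=
  (sylvesterMatrix f g).det

namespace FactorOfResultantAux

open Finset

variable {R : Type*} [CommRing R]

/-- Matrix whose rows are the coefficient vectors (from degree `N-1` down to `0`)
of a family of polynomials. -/
noncomputable def Cmat (N : ℕ) (hs : ℕ → R[X]) : Matrix (Fin N) (Fin N) R :=
  fun p j => (hs (p : ℕ)).coeff (N - 1 - (j : ℕ))

/-- Upper-triangular unipotent "Taylor expansion" matrix. -/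
noncomputable def Tmat (N : ℕ) (ζ : R) : Matrix (Fin N) (Fin N) R :=
  fun j l => if (j : ℕ) ≤ (l : ℕ) then
    ((N - 1 - (j : ℕ)).choose (N - 1 - (l : ℕ)) : R) * ζ ^ ((l : ℕ) - (j : ℕ)) else 0

/-- Shift exponent of the `p`-th row of the Sylvester matrix. -/
def ashift (n m p : ℕ) : ℕ := if p < n then n - 1 - p else m - 1 - (p - n)

/-- The polynomial whose coefficients form the `p`-th row of the Sylvester matrix. -/
noncomputable def rowp (n m : ℕ) (f g : R[X]) (p : ℕ) : R[X] :=
  (if p < n then f else g) * X ^ ashift n m p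

/-- Block upper-triangular unipotent row-mixing matrix. -/
noncomputable def Umat (N n m : ℕ) (ζ : R) : Matrix (Fin N) (Fin N) R :=
  fun p q => if (((p : ℕ) < n ↔ (q : ℕ) < n) ∧ (p : ℕ) ≤ (q : ℕ)) then
    ((ashift n m (p : ℕ)).choose (ashift n m (q : ℕ)) : R) * ζ ^ ((q : ℕ) - (p : ℕ)) else 0

lemma coeff_mul_X_pow_band (h : R[X]) {m n N i j : ℕ}
    (hdeg : h.natDegree ≤ m) (hi : i < n) (hj : j < N) (hN : N = n + m) :
    (h * X ^ (n - 1 - i)).coeff (N - 1 - j) =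
      if i ≤ j ∧ j ≤ i + m then h.coeff (m + i - j) else 0 := by
  rw [Polynomial.coeff_mul_X_pow']
  by_cases h1 : j ≤ i + m
  · rw [if_pos (by omega : n - 1 - i ≤ N - 1 - j)]
    by_cases h2 : i ≤ j
    · rw [if_pos ⟨h2, h1⟩]; congr 1; omega
    · rw [if_neg (by tauto)]
      apply Polynomial.coeff_eq_zero_of_natDegree_lt
      omega
  · rw [if_neg (by omega), if_neg (by tauto)]

lemma sylvester_eq (f g : R[X]) :
    sylvesterMatrix f g =
      Cmat (g.natDegree + f.natDegree) (rowp g.natDegree f.natDegree f g) := by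
  ext p j
  have hp := p.isLt
  have hj := j.isLt
  simp only [sylvesterMatrix, Cmat, rowp, ashift]
  by_cases hpn : (p : ℕ) < g.natDegree
  · simp only [if_pos hpn]
    exact (coeff_mul_X_pow_band f le_rfl hpn hj rfl).symm
  · simp only [if_neg hpn]
    exact (coeff_mul_X_pow_band g le_rfl (by omega : (p:ℕ) - g.natDegree < f.natDegree) hj
      (Nat.add_comm _ _)).symm

lemma rowp_natDegree_lt (n m : ℕ) (f g : R[X]) (hfm : f.natDegree ≤ m)
    (hgn : g.natDegree ≤ n) (p : Fin (n + m)) :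
    (rowp n m f g (p : ℕ)).natDegree < n + m := by
  have hp := p.isLt
  have h1 : (rowp n m f g (p : ℕ)).natDegree ≤
      (if (p : ℕ) < n then f else g).natDegree + ashift n m (p : ℕ) :=
    natDegree_mul_le.trans (add_le_add le_rfl (natDegree_X_pow_le _))
  refine lt_of_le_of_lt h1 ?_
  unfold ashift
  by_cases hpn : (p : ℕ) < n
  · simp only [if_pos hpn]; omega
  · simp only [if_neg hpn]; omega

lemma Tmat_det (N : ℕ) (ζ : R) : (Tmat N ζ).det = 1 := by
  rw [Matrix.det_of_upperTriangular (M := Tmat N ζ)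
    (by intro i j hij
        exact if_neg (by exact not_le.2 hij))]
  apply Finset.prod_eq_one
  intro l _
  simp [Tmat]

lemma Umat_det (N n m : ℕ) (ζ : R) : (Umat N n m ζ).det = 1 := by
  rw [Matrix.det_of_upperTriangular (M := Umat N n m ζ)
    (by intro i j hij
        exact if_neg (by simp only [not_and]; intro _; exact not_le.2 hij))]
  apply Finset.prod_eq_one
  intro l _
  simp [Umat]

lemma hasse_sum (ζ : R) (N : ℕ) (h : R[X]) (hdeg : h.natDegree < N) (l : Fin N) :
    (∑ j : Fin N, h.coeff (N - 1 - (j : ℕ)) *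
      (if (j : ℕ) ≤ (l : ℕ) then
        ((N - 1 - (j : ℕ)).choose (N - 1 - (l : ℕ)) : R) * ζ ^ ((l : ℕ) - (j : ℕ)) else 0))
      = (Polynomial.taylor ζ h).coeff (N - 1 - (l : ℕ)) := by
  have hl : (l : ℕ) < N := l.isLt
  set k := N - 1 - (l : ℕ) with hk
  have hkN : k < N := by omega
  rw [Polynomial.taylor_coeff, Polynomial.eval_eq_sum_range'
    (lt_of_le_of_lt (le_trans (Polynomial.natDegree_hasseDeriv_le h k) (Nat.sub_le _ _)) hdeg)]
  rw [Fin.sum_univ_eq_sum_range (fun j => h.coeff (N - 1 - j) *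
    (if j ≤ (l : ℕ) then ((N - 1 - j).choose k : R) * ζ ^ ((l : ℕ) - j) else 0)) N]
  rw [← Finset.sum_range_reflect]
  have LHSstep : ∀ s ∈ Finset.range N,
      h.coeff (N - 1 - (N - 1 - s)) * (if N - 1 - s ≤ (l : ℕ) then
        ((N - 1 - (N - 1 - s)).choose k : R) * ζ ^ ((l : ℕ) - (N - 1 - s)) else 0)
      = if k ≤ s then ((s.choose k : ℕ) : R) * (h.coeff s * ζ ^ (s - k)) else 0 := by
    intro s hs
    have hsN : s < N := Finset.mem_range.1 hs
    have h1 : N - 1 - (N - 1 - s) = s := by omega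
    rw [h1]
    by_cases h2 : k ≤ s
    · rw [if_pos (by omega : N - 1 - s ≤ (l : ℕ)), if_pos h2,
        (by omega : (l : ℕ) - (N - 1 - s) = s - k)]
      ring
    · rw [if_neg (by omega), if_neg h2, mul_zero]
  rw [Finset.sum_congr rfl LHSstep]
  have RHSstep : ∀ i ∈ Finset.range N, (Polynomial.hasseDeriv k h).coeff i * ζ ^ i
      = (((i + k).choose k : ℕ) : R) * (h.coeff (i + k) * ζ ^ i) := by
    intro i _
    rw [Polynomial.hasseDeriv_coeff]
    ring
  rw [Finset.sum_congr rfl RHSstep]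
  rw [Finset.range_eq_Ico, ← Finset.sum_Ico_consecutive _ (Nat.zero_le k) hkN.le,
    Finset.sum_eq_zero (fun s hs => if_neg
      (by have := Finset.mem_Ico.1 hs; omega)), zero_add,
    Finset.sum_Ico_eq_sum_range]
  rw [← Nat.Ico_zero_eq_range, ← Finset.sum_Ico_consecutive _ (Nat.zero_le (N - k))
      (Nat.sub_le N k), Nat.Ico_zero_eq_range]
  have hzero : ∀ i ∈ Finset.Ico (N - k) N,
      (((i + k).choose k : ℕ) : R) * (h.coeff (i + k) * ζ ^ i) = 0 := by
    intro i hi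
    have := Finset.mem_Ico.1 hi
    rw [Polynomial.coeff_eq_zero_of_natDegree_lt (by omega)]
    ring
  rw [Finset.sum_eq_zero hzero, add_zero]
  apply Finset.sum_congr rfl
  intro i hi
  rw [if_pos (Nat.le_add_right k i), (by omega : k + i - k = i), Nat.add_comm k i]

lemma Cmat_mul_Tmat (N : ℕ) (ζ : R) (hs : ℕ → R[X])
    (hdeg : ∀ p : Fin N, (hs (p : ℕ)).natDegree < N) :
    Cmat N hs * Tmat N ζ = Cmat N (fun p => Polynomial.taylor ζ (hs p)) := by
  ext p l
  rw [Matrix.mul_apply]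
  simp only [Cmat, Tmat]
  exact hasse_sum ζ N (hs (p : ℕ)) (hdeg p) l

lemma binom_coeff (F : R[X]) (ζ : R) (a t : ℕ) :
    (∑ u ∈ Finset.range (a + 1),
      (a.choose u : R) * ζ ^ (a - u) * (F * X ^ u).coeff t)
      = (F * (X + C ζ) ^ a).coeff t := by
  rw [add_pow, Finset.mul_sum, Polynomial.finset_sum_coeff]
  apply Finset.sum_congr rfl
  intro u hu
  have key : F * (X ^ u * C ζ ^ (a - u) * ((a.choose u : ℕ) : R[X]))
      = F * X ^ u * C (ζ ^ (a - u) * ((a.choose u : ℕ) : R)) := by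
    rw [← Polynomial.C_eq_natCast, Polynomial.C_mul, Polynomial.C_pow]
    ring
  rw [key, Polynomial.coeff_mul_C]
  ring

lemma binom_coeff' (F : R[X]) (ζ : R) (a t b : ℕ) (hab : a < b) :
    (∑ u ∈ Finset.range b,
      (a.choose u : R) * ζ ^ (a - u) * (F * X ^ u).coeff t)
      = (F * (X + C ζ) ^ a).coeff t := by
  rw [← binom_coeff F ζ a t]
  symm
  apply Finset.sum_subset (Finset.range_subset_range.2 hab)
  intro x hx hnx
  rw [Nat.choose_eq_zero_of_lt (by simp only [mem_range] at hx hnx; omega)]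
  simp

lemma Umat_mul_Cmat (n m : ℕ) (ζ : R) (F G : R[X]) :
    Umat (n + m) n m ζ * Cmat (n + m) (rowp n m F G) =
      Cmat (n + m) (fun p => (if p < n then F else G) * (X + C ζ) ^ ashift n m p) := by
  ext p j
  rw [Matrix.mul_apply]
  simp only [Cmat, Umat, rowp]
  set t := n + m - 1 - (j : ℕ) with ht
  have hp := p.isLt
  refine Eq.trans (Fin.sum_univ_eq_sum_range (fun q => (if (((p : ℕ) < n ↔ q < n) ∧ (p : ℕ) ≤ q) then
      ((ashift n m (p : ℕ)).choose (ashift n m q) : R) * ζ ^ (q - (p : ℕ)) else 0) *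
      ((if q < n then F else G) * X ^ ashift n m q).coeff t) (n + m)) ?_
  by_cases hpn : (p : ℕ) < n
  · have step1 : ∀ q ∈ Finset.range (n + m),
        (if (((p : ℕ) < n ↔ q < n) ∧ (p : ℕ) ≤ q) then
          ((ashift n m (p : ℕ)).choose (ashift n m q) : R) * ζ ^ (q - (p : ℕ)) else 0) *
          ((if q < n then F else G) * X ^ ashift n m q).coeff t
        = if q < n then ((n - 1 - (p : ℕ)).choose (n - 1 - q) : R) * ζ ^ (q - (p : ℕ)) *
            (F * X ^ (n - 1 - q)).coeff t else 0 := by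
      intro q hq
      by_cases hqn : q < n
      · simp only [if_pos hqn, ashift, if_pos hpn]
        by_cases hpq : (p : ℕ) ≤ q
        · rw [if_pos ⟨iff_of_true hpn hqn, hpq⟩]
        · rw [if_neg (show ¬(((p : ℕ) < n ↔ q < n) ∧ (p : ℕ) ≤ q) from by tauto),
            Nat.choose_eq_zero_of_lt (show n - 1 - (p : ℕ) < n - 1 - q from by omega)]
          simp
      · simp only [if_neg hqn]
        rw [if_neg (show ¬(((p : ℕ) < n ↔ q < n) ∧ (p : ℕ) ≤ q) from by tauto), zero_mul]
    rw [Finset.sum_congr rfl step1]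
    rw [← Finset.sum_subset (Finset.range_subset_range.2 (by omega : n ≤ n + m))
        (fun x hx hnx => if_neg (by simp only [Finset.mem_range] at hnx; omega))]
    rw [Finset.sum_congr rfl (fun q hq => if_pos (Finset.mem_range.1 hq))]
    rw [← Finset.sum_range_reflect]
    have step2 : ∀ u ∈ Finset.range n,
        ((n - 1 - (p : ℕ)).choose (n - 1 - (n - 1 - u)) : R) * ζ ^ ((n - 1 - u) - (p : ℕ)) *
          (F * X ^ (n - 1 - (n - 1 - u))).coeff t
        = ((n - 1 - (p : ℕ)).choose u : R) * ζ ^ ((n - 1 - (p : ℕ)) - u) *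
          (F * X ^ u).coeff t := by
      intro u hu
      have hun : u < n := Finset.mem_range.1 hu
      rw [(by omega : n - 1 - (n - 1 - u) = u),
        (by omega : (n - 1 - u) - (p : ℕ) = (n - 1 - (p : ℕ)) - u)]
    rw [Finset.sum_congr rfl step2]
    simp only [ashift, if_pos hpn]
    exact binom_coeff' F ζ (n - 1 - (p : ℕ)) t n (by omega)
  · have hm1 : (p : ℕ) - n < m := by omega
    have step1 : ∀ q ∈ Finset.range (n + m),
        (if (((p : ℕ) < n ↔ q < n) ∧ (p : ℕ) ≤ q) then
          ((ashift n m (p : ℕ)).choose (ashift n m q) : R) * ζ ^ (q - (p : ℕ)) else 0) *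
          ((if q < n then F else G) * X ^ ashift n m q).coeff t
        = if n ≤ q then ((m - 1 - ((p : ℕ) - n)).choose (m - 1 - (q - n)) : R) *
            ζ ^ (q - (p : ℕ)) * (G * X ^ (m - 1 - (q - n))).coeff t else 0 := by
      intro q hq
      have hqN := Finset.mem_range.1 hq
      by_cases hqn : q < n
      · simp only [if_pos hqn]
        rw [if_neg (show ¬(((p : ℕ) < n ↔ q < n) ∧ (p : ℕ) ≤ q) from by tauto),
          if_neg (show ¬ n ≤ q from by omega), zero_mul]
      · simp only [if_neg hqn, ashift, if_neg hpn]
        by_cases hpq : (p : ℕ) ≤ q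
        · rw [if_pos (show n ≤ q from by omega), if_pos ⟨iff_of_false hpn hqn, hpq⟩]
        · rw [if_pos (show n ≤ q from by omega),
            if_neg (show ¬(((p : ℕ) < n ↔ q < n) ∧ (p : ℕ) ≤ q) from by tauto),
            Nat.choose_eq_zero_of_lt
              (show m - 1 - ((p : ℕ) - n) < m - 1 - (q - n) from by omega)]
          simp
    rw [Finset.sum_congr rfl step1]
    rw [Finset.range_eq_Ico, ← Finset.sum_Ico_consecutive _ (Nat.zero_le n)
        (by omega : n ≤ n + m),
      Finset.sum_eq_zero (fun q hq => if_neg (by have := Finset.mem_Ico.1 hq; omega)), zero_add,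
      Finset.sum_Ico_eq_sum_range]
    rw [(by omega : n + m - n = m)]
    have step2 : ∀ v ∈ Finset.range m,
        (if n ≤ n + v then ((m - 1 - ((p : ℕ) - n)).choose (m - 1 - (n + v - n)) : R) *
          ζ ^ (n + v - (p : ℕ)) * (G * X ^ (m - 1 - (n + v - n))).coeff t else 0)
        = ((m - 1 - ((p : ℕ) - n)).choose (m - 1 - v) : R) * ζ ^ (n + v - (p : ℕ)) *
            (G * X ^ (m - 1 - v)).coeff t := by
      intro v _
      rw [if_pos (Nat.le_add_right n v), (by omega : n + v - n = v)]
    rw [Finset.sum_congr rfl step2]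
    rw [← Finset.sum_range_reflect]
    have step3 : ∀ u ∈ Finset.range m,
        ((m - 1 - ((p : ℕ) - n)).choose (m - 1 - (m - 1 - u)) : R) *
          ζ ^ (n + (m - 1 - u) - (p : ℕ)) * (G * X ^ (m - 1 - (m - 1 - u))).coeff t
        = ((m - 1 - ((p : ℕ) - n)).choose u : R) *
          ζ ^ ((m - 1 - ((p : ℕ) - n)) - u) * (G * X ^ u).coeff t := by
      intro u hu
      have hum : u < m := Finset.mem_range.1 hu
      rw [(by omega : m - 1 - (m - 1 - u) = u),
        (by omega : n + (m - 1 - u) - (p : ℕ) = (m - 1 - ((p : ℕ) - n)) - u)]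
    rw [Finset.sum_congr rfl step3]
    simp only [ashift, if_neg hpn]
    exact binom_coeff' G ζ (m - 1 - ((p : ℕ) - n)) t m (by omega)

lemma det_eq_zero_aux (ζ : R) (n m : ℕ) (f g : R[X]) (hfm : f.natDegree ≤ m)
    (hgn : g.natDegree ≤ n) (hm1 : 1 ≤ m) (hf0 : f.eval ζ = 0) (hg0 : g.eval ζ = 0) :
    (Cmat (n + m) (rowp n m f g)).det = 0 := by
  have hdeg := rowp_natDegree_lt n m f g hfm hgn
  have hdet : (Cmat (n + m) (rowp n m f g)).det
      = (Cmat (n + m) (fun p => Polynomial.taylor ζ (rowp n m f g p))).det := by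
    rw [← Cmat_mul_Tmat (n + m) ζ _ hdeg, Matrix.det_mul, Tmat_det, mul_one]
  rw [hdet]
  apply Matrix.det_eq_zero_of_column_eq_zero (⟨n + m - 1, by omega⟩ : Fin (n + m))
  intro p
  simp only [Cmat]
  rw [show n + m - 1 - ((⟨n + m - 1, by omega⟩ : Fin (n + m)) : ℕ) = 0 from by simp]
  rw [Polynomial.taylor_coeff_zero]
  unfold rowp
  rw [Polynomial.eval_mul, Polynomial.eval_pow, Polynomial.eval_X]
  by_cases hpn : (p : ℕ) < n
  · rw [if_pos hpn, hf0, zero_mul]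
  · rw [if_neg hpn, hg0, zero_mul]

lemma main_aux {R : Type*} [CommRing R] [IsDomain R] (ζ : R) (n m : ℕ) (f g : R[X])
    (hfm : f.natDegree ≤ m) (hgn : g.natDegree ≤ n) (hm1 : 1 ≤ m) (hn1 : 1 ≤ n)
    (hc0 : g.eval ζ ≠ 0)
    (hdvd : ∀ k, k < m → (g.eval ζ) ^ (m - k) ∣ (Polynomial.hasseDeriv k f).eval ζ) :
    (g.eval ζ) ^ m ∣ (Cmat (n + m) (rowp n m f g)).det := by
  classical
  set c := g.eval ζ with hc
  set F := Polynomial.taylor ζ f with hF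
  set G := Polynomial.taylor ζ g with hG
  have hFm : F.natDegree ≤ m := by rw [hF, Polynomial.natDegree_taylor]; exact hfm
  have hGn : G.natDegree ≤ n := by rw [hG, Polynomial.natDegree_taylor]; exact hgn
  have hdeg := rowp_natDegree_lt n m f g hfm hgn
  have step1 : (Cmat (n + m) (rowp n m f g)).det
      = (Cmat (n + m) (fun p => Polynomial.taylor ζ (rowp n m f g p))).det := by
    rw [← Cmat_mul_Tmat (n + m) ζ _ hdeg, Matrix.det_mul, Tmat_det, mul_one]
  have htay : (fun p : ℕ => Polynomial.taylor ζ (rowp n m f g p))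
      = fun p => (if p < n then F else G) * (X + C ζ) ^ ashift n m p := by
    funext p
    simp only [rowp]
    rw [Polynomial.taylor_mul]
    congr 1
    · rw [apply_ite (Polynomial.taylor ζ), hF, hG]
    · rw [Polynomial.taylor_apply, Polynomial.X_pow_comp]
  have step2 : (Cmat (n + m) (fun p => Polynomial.taylor ζ (rowp n m f g p))).det
      = (Cmat (n + m) (rowp n m F G)).det := by
    rw [htay, ← Umat_mul_Cmat n m ζ F G, Matrix.det_mul, Umat_det, one_mul]
  have hdvdF : ∀ k, k < m → c ^ (m - k) ∣ F.coeff k := by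
    intro k hk
    rw [hF, Polynomial.taylor_coeff]
    exact hdvd k hk
  set d : ℕ → R := fun k => if hk : k < m then (hdvdF k hk).choose else F.coeff k with hd
  have hdspec : ∀ k, k ≤ m → F.coeff k = c ^ (m - k) * d k := by
    intro k hk
    by_cases hkm : k < m
    · simp only [hd, dif_pos hkm]
      exact (hdvdF k hkm).choose_spec
    · have hkme : k = m := by omega
      simp only [hd, dif_neg hkm]
      rw [hkme, Nat.sub_self, pow_zero, one_mul]
  set B : Matrix (Fin (n + m)) (Fin (n + m)) R := fun p j =>
    if (p : ℕ) < n then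
      (if (p : ℕ) ≤ (j : ℕ) ∧ (j : ℕ) ≤ (p : ℕ) + m then d (m + (p : ℕ) - (j : ℕ)) else 0)
    else
      (if (p : ℕ) - n ≤ (j : ℕ) ∧ (j : ℕ) ≤ (p : ℕ) - n + n then
        (if (j : ℕ) = (p : ℕ) - n + n then 1
         else G.coeff (n + ((p : ℕ) - n) - (j : ℕ)) * c ^ (n + ((p : ℕ) - n) - (j : ℕ) - 1))
       else 0) with hB
  set r : ℕ → ℕ := fun p => if p < n then p else p - 1 with hr
  have hAB : ∀ p j : Fin (n + m), c ^ r (p : ℕ) * Cmat (n + m) (rowp n m F G) p j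
      = c ^ (j : ℕ) * B p j := by
    intro p j
    have hp := p.isLt
    have hj := j.isLt
    simp only [Cmat, rowp, hB, hr]
    by_cases hpn : (p : ℕ) < n
    · simp only [ashift, if_pos hpn]
      rw [coeff_mul_X_pow_band F (m := m) (n := n) (N := n + m) (i := (p : ℕ)) (j := (j : ℕ))
        hFm hpn hj rfl]
      by_cases hband : (p : ℕ) ≤ (j : ℕ) ∧ (j : ℕ) ≤ (p : ℕ) + m
      · rw [if_pos hband, if_pos hband,
          hdspec (m + (p : ℕ) - (j : ℕ)) (by omega), ← mul_assoc, ← pow_add,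
          show (p : ℕ) + (m - (m + (p : ℕ) - (j : ℕ))) = (j : ℕ) from by omega]
      · rw [if_neg hband, if_neg hband, mul_zero, mul_zero]
    · simp only [ashift, if_neg hpn]
      rw [coeff_mul_X_pow_band G (m := n) (n := m) (N := n + m) (i := (p : ℕ) - n)
        (j := (j : ℕ)) hGn (by omega) hj (by omega)]
      by_cases hband : ((p : ℕ) - n ≤ (j : ℕ) ∧ (j : ℕ) ≤ (p : ℕ) - n + n)
      · rw [if_pos hband, if_pos hband]
        by_cases hdiag : (j : ℕ) = (p : ℕ) - n + n
        · rw [if_pos hdiag,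
            show n + ((p : ℕ) - n) - (j : ℕ) = 0 from by omega,
            show G.coeff 0 = c from by rw [hG, Polynomial.taylor_coeff_zero, hc],
            mul_one, ← pow_succ,
            show ((p : ℕ) - 1) + 1 = (j : ℕ) from by omega]
        · rw [if_neg hdiag,
            show (p : ℕ) - 1 = (j : ℕ) + (n + ((p : ℕ) - n) - (j : ℕ) - 1) from by omega,
            pow_add]
          ring
      · rw [if_neg hband, if_neg hband, mul_zero, mul_zero]
  have hdet2 : (∏ p : Fin (n + m), c ^ r (p : ℕ)) * (Cmat (n + m) (rowp n m F G)).det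
      = (∏ j : Fin (n + m), c ^ (j : ℕ)) * B.det := by
    calc (∏ p : Fin (n + m), c ^ r (p : ℕ)) * (Cmat (n + m) (rowp n m F G)).det
        = (Matrix.of fun p j : Fin (n + m) =>
            c ^ r (p : ℕ) * Cmat (n + m) (rowp n m F G) p j).det :=
          (Matrix.det_mul_column _ _).symm
      _ = (Matrix.of fun p j : Fin (n + m) => c ^ (j : ℕ) * B p j).det := by
          congr 1; ext p j; exact hAB p j
      _ = (∏ j : Fin (n + m), c ^ (j : ℕ)) * B.det := Matrix.det_mul_row _ _
  rw [Finset.prod_pow_eq_pow_sum, Finset.prod_pow_eq_pow_sum] at hdet2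
  have hsum : (∑ j : Fin (n + m), (j : ℕ)) = (∑ p : Fin (n + m), r (p : ℕ)) + m := by
    have e1 := Fin.sum_univ_eq_sum_range (fun i => i) (n + m)
    have e2 := Fin.sum_univ_eq_sum_range (fun i => r i) (n + m)
    rw [e1, e2]
    rw [Finset.range_eq_Ico,
      ← Finset.sum_Ico_consecutive (fun i : ℕ => i) (Nat.zero_le n)
        (show n ≤ n + m from by omega),
      ← Finset.sum_Ico_consecutive (fun i : ℕ => r i) (Nat.zero_le n)
        (show n ≤ n + m from by omega)]
    have h1 : ∑ i ∈ Finset.Ico 0 n, r i = ∑ i ∈ Finset.Ico 0 n, i :=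
      Finset.sum_congr rfl (fun i hi => by
        simp only [hr]; exact if_pos (Finset.mem_Ico.1 hi).2)
    have h2 : ∑ i ∈ Finset.Ico n (n + m), r i = ∑ i ∈ Finset.Ico n (n + m), (i - 1) :=
      Finset.sum_congr rfl (fun i hi => by
        simp only [hr]; exact if_neg (by have := Finset.mem_Ico.1 hi; omega))
    have h3 : ∑ i ∈ Finset.Ico n (n + m), i = (∑ i ∈ Finset.Ico n (n + m), (i - 1)) + m := by
      have h4 : ∑ i ∈ Finset.Ico n (n + m), i = ∑ i ∈ Finset.Ico n (n + m), ((i - 1) + 1) :=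
        Finset.sum_congr rfl (fun i hi => by have := Finset.mem_Ico.1 hi; omega)
      rw [h4, Finset.sum_add_distrib, Finset.sum_const, Nat.card_Ico, smul_eq_mul, mul_one]
      omega
    omega
  rw [hsum, pow_add, mul_assoc] at hdet2
  have hcancel := mul_left_cancel₀ (pow_ne_zero _ hc0) hdet2
  rw [step1, step2, hcancel]
  exact dvd_mul_right _ _

end FactorOfResultantAux

open FactorOfResultantAux

/-- Lemma 2.4: if `g(ζ)^(m-k)` divides the value at `ζ` of the `k`-th Hasse derivative of `f`
for all `0 ≤ k < m = deg f`, then `g(ζ)^m` divides `res_x(f, g)`. -/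
theorem factor_of_resultant {R : Type*} [CommRing R] [IsDomain R] (ζ : R) (f g : R[X])
    (hf : f.leadingCoeff ≠ 0) (hg : g.leadingCoeff ≠ 0)
    (h : ∀ k : ℕ, k < f.natDegree →
      (g.eval ζ) ^ (f.natDegree - k) ∣ (Polynomial.hasseDeriv k f).eval ζ) :
    (g.eval ζ) ^ f.natDegree ∣ _root_.resultant f g := by
  by_cases hm0 : f.natDegree = 0
  · rw [hm0, pow_zero]; exact one_dvd _
  have hm1 : 1 ≤ f.natDegree := by omega
  unfold _root_.resultant
  rw [sylvester_eq]
  by_cases hc0 : g.eval ζ = 0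
  · have hf0 : f.eval ζ = 0 := by
      have h0 := h 0 (by omega)
      rw [hc0, zero_pow (show f.natDegree - 0 ≠ 0 from by omega), zero_dvd_iff] at h0
      rwa [Polynomial.hasseDeriv_zero'] at h0
    rw [det_eq_zero_aux ζ _ _ f g le_rfl le_rfl hm1 hf0 hc0]
    exact dvd_zero _
  by_cases hn0 : g.natDegree = 0
  · have hgc : g.eval ζ = g.coeff 0 := by
      conv_lhs => rw [Polynomial.eq_C_of_natDegree_eq_zero hn0]
      rw [Polynomial.eval_C]
    have hdiag : Cmat (g.natDegree + f.natDegree) (rowp g.natDegree f.natDegree f g)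
        = Matrix.diagonal (fun _ : Fin (g.natDegree + f.natDegree) => g.coeff 0) := by
      ext p j
      have hp := p.isLt
      have hj := j.isLt
      have hcond : ¬ (p : ℕ) < g.natDegree := by omega
      rw [Matrix.diagonal_apply]
      simp only [Cmat, rowp, ashift, if_neg hcond]
      rw [Polynomial.coeff_mul_X_pow']
      by_cases hpj : p = j
      · subst hpj
        rw [if_pos (by omega), if_pos rfl]
        congr 1
        omega
      · rw [if_neg hpj]
        have hne : (p : ℕ) ≠ (j : ℕ) := fun hh => hpj (Fin.ext hh)
        by_cases hcc : f.natDegree - 1 - ((p : ℕ) - g.natDegree)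
            ≤ g.natDegree + f.natDegree - 1 - (j : ℕ)
        · rw [if_pos hcc]
          apply Polynomial.coeff_eq_zero_of_natDegree_lt
          omega
        · rw [if_neg hcc]
    rw [hdiag, Matrix.det_diagonal, Finset.prod_const, Finset.card_univ, Fintype.card_fin,
      hgc, hn0, Nat.zero_add]
  · have hn1 : 1 ≤ g.natDegree := by omega
    exact main_aux ζ g.natDegree f.natDegree f g le_rfl le_rfl hm1 hn1 hc0 h
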